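/- Let N be a natural number and let s, t : Fin N → Option Bool. Define the 2×2 complex matrices Q = E_{01} (the matrix with a 1 in the (0,1) entry) and Q† = E_{10}, and assign to each value: none ↦ the 2×2 identity, some false ↦ Q, some true ↦ Q†. Let G_s be the N-fold Kronecker product, i.e. the matrix indexed by (Fin N → Fin 2) with entries G_s(x, y) = ∏_{i} (factor assigned to s i)(x i, y i), and similarly G_t; set T_s = G_s − G_sᴴ and T_t = G_t − G_tᴴ (ᴴ denotes conjugate transpose). If the supports {i : s i ≠ none} and {i : t i ≠ none} are equal, or if they are disjoint, then T_s and T_t commute: T_s·T_t = T_t·T_s. -/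

import Mathlib

open Matrix

/-- The single-qubit factor assigned to an `Option Bool` label: `none` is the identity,
`some false` is the qubit annihilation operator `Q = E_{01}`, and `some true` is the
qubit creation operator `Q† = E_{10}`. -/
def qubitFactor : Option Bool → Matrix (Fin 2) (Fin 2) ℂ
  | none => 1
  | some false => single 0 1 1
  | some true => single 1 0 1

/-- The `N`-fold Kronecker product of the single-qubit factors determined by
`s : Fin N → Option Bool`. -/
def excitationProd (N : ℕ) (s : Fin N → Option Bool) :
    Matrix (Fin N → Fin 2) (Fin N → Fin 2) ℂ :=
  Matrix.of fun x y => ∏ i, qubitFactor (s i) (x i) (y i)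

/-- N-fold Kronecker product of a family of 2×2 matrices. -/
def kron {N : ℕ} (A : Fin N → Matrix (Fin 2) (Fin 2) ℂ) :
    Matrix (Fin N → Fin 2) (Fin N → Fin 2) ℂ :=
  Matrix.of fun x y => ∏ i, A i (x i) (y i)

lemma kron_mul {N : ℕ} (A B : Fin N → Matrix (Fin 2) (Fin 2) ℂ) :
    kron A * kron B = kron (fun i => A i * B i) := by
  ext x y
  simp only [kron, Matrix.mul_apply, Matrix.of_apply]
  calc ∑ z : Fin N → Fin 2, (∏ i, A i (x i) (z i)) * ∏ i, B i (z i) (y i)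
      = ∑ z : Fin N → Fin 2, ∏ i, A i (x i) (z i) * B i (z i) (y i) := by
        simp [Finset.prod_mul_distrib]
    _ = ∏ i, ∑ k : Fin 2, A i (x i) k * B i k (y i) := by
        rw [Finset.prod_univ_sum]
        simp [Fintype.piFinset_univ]

lemma kron_conjTranspose {N : ℕ} (A : Fin N → Matrix (Fin 2) (Fin 2) ℂ) :
    (kron A)ᴴ = kron (fun i => (A i)ᴴ) := by
  ext x y
  simp [kron, Matrix.conjTranspose_apply, star_prod]

lemma kron_eq_zero {N : ℕ} (A : Fin N → Matrix (Fin 2) (Fin 2) ℂ) (j : Fin N)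
    (h : A j = 0) : kron A = 0 := by
  ext x y
  exact Finset.prod_eq_zero (Finset.mem_univ j) (by simp [h])

lemma kron_mul_eq_zero {N : ℕ} (A B : Fin N → Matrix (Fin 2) (Fin 2) ℂ) (j : Fin N)
    (h : A j * B j = 0) : kron A * kron B = 0 := by
  rw [kron_mul]; exact kron_eq_zero _ j h

lemma kron_comm {N : ℕ} (A B : Fin N → Matrix (Fin 2) (Fin 2) ℂ)
    (h : ∀ i, Commute (A i) (B i)) : Commute (kron A) (kron B) := by
  show kron A * kron B = kron B * kron A
  rw [kron_mul, kron_mul]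
  have : (fun i => A i * B i) = fun i => B i * A i := funext fun i => h i
  rw [this]

lemma qf_mul_self (b : Bool) :
    qubitFactor (some b) * qubitFactor (some b) = 0 := by
  cases b <;>
    · ext i j
      fin_cases i <;> fin_cases j <;>
        simp [qubitFactor, Matrix.mul_apply, Fin.sum_univ_two, Matrix.single]

lemma qf_conjT (b : Bool) :
    (qubitFactor (some b))ᴴ = qubitFactor (some (!b)) := by
  cases b <;>
    · ext i j
      fin_cases i <;> fin_cases j <;>
        simp [qubitFactor, Matrix.conjTranspose_apply, Matrix.single]

/-- Qubit excitation generators `T = G - G†` with equal or disjoint support commute. -/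
theorem stmt3 (N : ℕ) (s t : Fin N → Option Bool)
    (h : {i : Fin N | s i ≠ none} = {i : Fin N | t i ≠ none} ∨
      Disjoint {i : Fin N | s i ≠ none} {i : Fin N | t i ≠ none}) :
    Commute (excitationProd N s - (excitationProd N s)ᴴ)
      (excitationProd N t - (excitationProd N t)ᴴ) := by
  have hA : excitationProd N s = kron (fun i => qubitFactor (s i)) := rfl
  have hB : excitationProd N t = kron (fun i => qubitFactor (t i)) := rfl
  rcases h with h | h
  · -- equal supports
    have hsupp : ∀ i, s i = none ↔ t i = none := by
      intro i
      have := Set.ext_iff.mp h i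
      simp only [Set.mem_setOf_eq] at this
      tauto
    by_cases h1 : ∀ i, s i = t i
    · have : s = t := funext h1
      subst this; exact Commute.refl _
    push_neg at h1
    obtain ⟨j, hj⟩ := h1
    have hj' : ∃ b, s j = some b ∧ t j = some (!b) := by
      rcases hsj : s j with _ | b
      · exact absurd (hsj.trans ((hsupp j).mp hsj).symm) hj
      · rcases htj : t j with _ | c
        · exact absurd (((hsupp j).mpr htj).trans htj.symm) hj
        · have hbc : b ≠ c := by rintro rfl; exact hj (hsj.trans htj.symm)
          exact ⟨b, rfl, by cases b <;> cases c <;> simp_all⟩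
    obtain ⟨b, hsb, htb⟩ := hj'
    by_cases h2 : ∃ i, s i ≠ none ∧ s i = t i
    · -- all eight products vanish
      obtain ⟨k, hk, hk'⟩ := h2
      obtain ⟨c, hsc⟩ := Option.ne_none_iff_exists'.mp hk
      have htc : t k = some c := hk' ▸ hsc
      rw [hA, hB, kron_conjTranspose, kron_conjTranspose]
      have z1 : kron (fun i => qubitFactor (s i)) * kron (fun i => qubitFactor (t i)) = 0 :=
        kron_mul_eq_zero _ _ k (by rw [hsc, htc]; exact qf_mul_self c)
      have z2 : kron (fun i => qubitFactor (t i)) * kron (fun i => qubitFactor (s i)) = 0 :=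
        kron_mul_eq_zero _ _ k (by rw [hsc, htc]; exact qf_mul_self c)
      have z3 : kron (fun i => (qubitFactor (s i))ᴴ) * kron (fun i => (qubitFactor (t i))ᴴ) = 0 :=
        kron_mul_eq_zero _ _ k (by rw [hsc, htc, qf_conjT]; exact qf_mul_self (!c))
      have z4 : kron (fun i => (qubitFactor (t i))ᴴ) * kron (fun i => (qubitFactor (s i))ᴴ) = 0 :=
        kron_mul_eq_zero _ _ k (by rw [hsc, htc, qf_conjT]; exact qf_mul_self (!c))
      have z5 : kron (fun i => qubitFactor (s i)) * kron (fun i => (qubitFactor (t i))ᴴ) = 0 :=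
        kron_mul_eq_zero _ _ j
          (by rw [hsb, htb, qf_conjT, Bool.not_not]; exact qf_mul_self b)
      have z6 : kron (fun i => (qubitFactor (t i))ᴴ) * kron (fun i => qubitFactor (s i)) = 0 :=
        kron_mul_eq_zero _ _ j
          (by rw [hsb, htb, qf_conjT, Bool.not_not]; exact qf_mul_self b)
      have z7 : kron (fun i => (qubitFactor (s i))ᴴ) * kron (fun i => qubitFactor (t i)) = 0 :=
        kron_mul_eq_zero _ _ j
          (by rw [hsb, htb, qf_conjT]; exact qf_mul_self (!b))
      have z8 : kron (fun i => qubitFactor (t i)) * kron (fun i => (qubitFactor (s i))ᴴ) = 0 :=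
        kron_mul_eq_zero _ _ j
          (by rw [hsb, htb, qf_conjT]; exact qf_mul_self (!b))
      show _ * _ = _ * _
      rw [sub_mul, sub_mul, mul_sub, mul_sub, mul_sub, mul_sub,
        z1, z2, z3, z4, z5, z6, z7, z8]
    · -- flipped everywhere on the support: T_t = -T_s
      push_neg at h2
      have hflip : (fun i => qubitFactor (t i)) = fun i => (qubitFactor (s i))ᴴ := by
        funext i
        rcases hsi : s i with _ | b
        · rw [(hsupp i).mp hsi]
          simp [qubitFactor]
        · have hne : s i ≠ t i := h2 i (by simp [hsi])
          rcases hti : t i with _ | c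
          · exact absurd ((hsupp i).mpr hti) (by simp [hsi])
          · have hcb : c = !b := by
              rw [hsi, hti] at hne
              cases b <;> cases c <;> simp_all
            rw [hcb, qf_conjT]
      rw [hA, hB, hflip, ← kron_conjTranspose, conjTranspose_conjTranspose,
        ← neg_sub (kron fun i => qubitFactor (s i))]
      exact (Commute.refl _).neg_right
  · -- disjoint supports
    have hdis : ∀ i, s i = none ∨ t i = none := by
      intro i
      by_contra hc
      push_neg at hc
      exact Set.disjoint_left.mp h hc.1 hc.2
    rw [hA, hB, kron_conjTranspose, kron_conjTranspose]
    have qf_none : qubitFactor none = 1 := rfl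
    have c1 : Commute (kron fun i => qubitFactor (s i)) (kron fun i => qubitFactor (t i)) :=
      kron_comm _ _ fun i => by
        rcases hdis i with hi | hi
        · rw [hi, qf_none]; exact Commute.one_left _
        · rw [hi, qf_none]; exact Commute.one_right _
    have c2 : Commute (kron fun i => qubitFactor (s i)) (kron fun i => (qubitFactor (t i))ᴴ) :=
      kron_comm _ _ fun i => by
        rcases hdis i with hi | hi
        · rw [hi, qf_none]; exact Commute.one_left _
        · rw [hi, qf_none, conjTranspose_one]; exact Commute.one_right _
    have c3 : Commute (kron fun i => (qubitFactor (s i))ᴴ) (kron fun i => qubitFactor (t i)) :=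
      kron_comm _ _ fun i => by
        rcases hdis i with hi | hi
        · rw [hi, qf_none, conjTranspose_one]; exact Commute.one_left _
        · rw [hi, qf_none]; exact Commute.one_right _
    have c4 : Commute (kron fun i => (qubitFactor (s i))ᴴ) (kron fun i => (qubitFactor (t i))ᴴ) :=
      kron_comm _ _ fun i => by
        rcases hdis i with hi | hi
        · rw [hi, qf_none, conjTranspose_one]; exact Commute.one_left _
        · rw [hi, qf_none, conjTranspose_one]; exact Commute.one_right _
    exact (c1.sub_right c2).sub_left (c3.sub_right c4)
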